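/- Suppose s : (0,∞)² × ℝ → ℝ is smooth, and define θ⁻¹ = ∂_ε s, p = θ ∂_ν s, π = -θ ∂_C s. Let n = ν⁻¹, let u : ℝ⁴ → ℝ⁴ be a smooth field with u^α u_α = -1, and let ε, ν, C be smooth functions on ℝ⁴. Assume the conservation laws ∂_α(n u^α) = 0 and ∂_α(n ε u^α u^β + (p+π)Δ^{αβ}) = 0 hold, where Δ^{αβ} = g^{αβ} + u^α u^β. Then the entropy flux S^α = n u^α s(ε,ν,C) satisfies ∂_α S^α = -θ⁻¹ π (∂_α u^α + n u^α ∂_α C). -/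

import Mathlib

noncomputable section

/-- Minkowski metric components diag(-1,1,1,1). -/
def ηd : Fin 4 → ℝ := fun α => if α = 0 then -1 else 1

/-- Minkowski inner product `u^α v_α`. -/
def mink (u v : Fin 4 → ℝ) : ℝ := ∑ α, ηd α * u α * v α

/-- Partial derivative in coordinate direction `α`. -/
def pd (α : Fin 4) (f : (Fin 4 → ℝ) → ℝ) (x : Fin 4 → ℝ) : ℝ :=
  fderiv ℝ f x (Pi.single α 1)

lemma ηd_sq (α : Fin 4) : ηd α * ηd α = 1 := by
  unfold ηd; split <;> norm_num

lemma pd_congr {f g : (Fin 4 → ℝ) → ℝ} (h : ∀ y, f y = g y) (α : Fin 4) (x : Fin 4 → ℝ) :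
    pd α f x = pd α g x := by rw [show f = g from funext h]

lemma pd_const (c : ℝ) (α : Fin 4) (x : Fin 4 → ℝ) : pd α (fun _ => c) x = 0 := by simp [pd]

lemma pd_mul {f g : (Fin 4 → ℝ) → ℝ} {x : Fin 4 → ℝ} (hf : DifferentiableAt ℝ f x)
    (hg : DifferentiableAt ℝ g x) (α : Fin 4) :
    pd α (fun y => f y * g y) x = f x * pd α g x + pd α f x * g x := by
  simp [pd, fderiv_fun_mul hf hg, mul_comm]

lemma pd_add {f g : (Fin 4 → ℝ) → ℝ} {x : Fin 4 → ℝ} (hf : DifferentiableAt ℝ f x)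
    (hg : DifferentiableAt ℝ g x) (α : Fin 4) :
    pd α (fun y => f y + g y) x = pd α f x + pd α g x := by
  simp [pd, fderiv_fun_add hf hg]

lemma pd_neg {f : (Fin 4 → ℝ) → ℝ} {x : Fin 4 → ℝ} (α : Fin 4) :
    pd α (fun y => -(f y)) x = -pd α f x := by
  simp [pd, fderiv_neg]

lemma pd_cmul {f : (Fin 4 → ℝ) → ℝ} {x : Fin 4 → ℝ} (c : ℝ) (hf : DifferentiableAt ℝ f x)
    (α : Fin 4) : pd α (fun y => c * f y) x = c * pd α f x := by
  simp [pd, fderiv_const_mul hf c]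

lemma pd_sum {f : Fin 4 → (Fin 4 → ℝ) → ℝ} {x : Fin 4 → ℝ}
    (hf : ∀ β, DifferentiableAt ℝ (f β) x) (α : Fin 4) :
    pd α (fun y => ∑ β, f β y) x = ∑ β, pd α (f β) x := by
  unfold pd
  rw [fderiv_fun_sum (fun β _ => hf β)]
  simp

lemma pd_inv {ν : (Fin 4 → ℝ) → ℝ} {x : Fin 4 → ℝ} (hν : DifferentiableAt ℝ ν x)
    (h0 : ν x ≠ 0) (α : Fin 4) :
    pd α (fun y => (ν y)⁻¹) x = -((ν x)^2)⁻¹ * pd α ν x := by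
  unfold pd
  have h := ((hasDerivAt_inv h0).comp_hasFDerivAt x hν.hasFDerivAt)
  have h2 : (fun y => (ν y)⁻¹) = (fun t => t⁻¹) ∘ ν := rfl
  rw [h2, h.fderiv]
  simp

lemma deriv_slice1 {F : ℝ × ℝ × ℝ → ℝ} (e a b : ℝ) (hF : DifferentiableAt ℝ F (e, a, b)) :
    deriv (fun t => F (t, a, b)) e = fderiv ℝ F (e, a, b) (1, 0, 0) :=
  (hF.hasFDerivAt.comp_hasDerivAt e
    ((hasDerivAt_id e).prodMk (hasDerivAt_const e (a, b)))).deriv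

lemma deriv_slice2 {F : ℝ × ℝ × ℝ → ℝ} (e a b : ℝ) (hF : DifferentiableAt ℝ F (e, a, b)) :
    deriv (fun t => F (e, t, b)) a = fderiv ℝ F (e, a, b) (0, 1, 0) :=
  (hF.hasFDerivAt.comp_hasDerivAt a
    ((hasDerivAt_const a e).prodMk ((hasDerivAt_id a).prodMk (hasDerivAt_const a b)))).deriv

lemma deriv_slice3 {F : ℝ × ℝ × ℝ → ℝ} (e a b : ℝ) (hF : DifferentiableAt ℝ F (e, a, b)) :
    deriv (fun t => F (e, a, t)) b = fderiv ℝ F (e, a, b) (0, 0, 1) :=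
  (hF.hasFDerivAt.comp_hasDerivAt b
    ((hasDerivAt_const b e).prodMk ((hasDerivAt_const b a).prodMk (hasDerivAt_id b)))).deriv

lemma pd_chain3 {F : ℝ × ℝ × ℝ → ℝ} {ε ν C : (Fin 4 → ℝ) → ℝ} {x : Fin 4 → ℝ}
    (hF : DifferentiableAt ℝ F (ε x, ν x, C x))
    (hε : DifferentiableAt ℝ ε x) (hν : DifferentiableAt ℝ ν x)
    (hC : DifferentiableAt ℝ C x) (α : Fin 4) :
    pd α (fun y => F (ε y, ν y, C y)) x
      = fderiv ℝ F (ε x, ν x, C x) (1,0,0) * pd α ε x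
        + fderiv ℝ F (ε x, ν x, C x) (0,1,0) * pd α ν x
        + fderiv ℝ F (ε x, ν x, C x) (0,0,1) * pd α C x := by
  have hΦ : HasFDerivAt (fun y => (ε y, ν y, C y))
      ((fderiv ℝ ε x).prod ((fderiv ℝ ν x).prod (fderiv ℝ C x))) x :=
    hε.hasFDerivAt.prodMk (hν.hasFDerivAt.prodMk hC.hasFDerivAt)
  have h := (hF.hasFDerivAt.comp x hΦ).fderiv
  unfold pd
  rw [show (fun y => F (ε y, ν y, C y)) = F ∘ (fun y => (ε y, ν y, C y)) from rfl, h]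
  set L := fderiv ℝ F (ε x, ν x, C x)
  set a := fderiv ℝ ε x (Pi.single α 1)
  set b := fderiv ℝ ν x (Pi.single α 1)
  set c := fderiv ℝ C x (Pi.single α 1)
  have hv : ((a, b, c) : ℝ × ℝ × ℝ)
      = a • ((1:ℝ),(0:ℝ),(0:ℝ)) + b • ((0:ℝ),(1:ℝ),(0:ℝ)) + c • ((0:ℝ),(0:ℝ),(1:ℝ)) := by
    refine Prod.ext ?_ (Prod.ext ?_ ?_) <;> norm_num
  rw [ContinuousLinearMap.comp_apply, ContinuousLinearMap.prod_apply,
    ContinuousLinearMap.prod_apply, hv, map_add, map_add, map_smul, map_smul, map_smul]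
  simp [smul_eq_mul, mul_comm]

lemma contDiff_fderiv_apply {F : ℝ × ℝ × ℝ → ℝ} (hF : ContDiff ℝ (⊤ : ℕ∞) F)
    {ε ν C : (Fin 4 → ℝ) → ℝ} (hε : ContDiff ℝ (⊤ : ℕ∞) ε) (hν : ContDiff ℝ (⊤ : ℕ∞) ν)
    (hC : ContDiff ℝ (⊤ : ℕ∞) C) (v : ℝ × ℝ × ℝ) :
    ContDiff ℝ (⊤ : ℕ∞) (fun y => fderiv ℝ F (ε y, ν y, C y) v) := by
  have h1 : ContDiff ℝ (⊤ : ℕ∞) (fderiv ℝ F) := hF.fderiv_right (by exact_mod_cast le_top)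
  exact (h1.comp (hε.prodMk (hν.prodMk hC))).clm_apply contDiff_const

/-- Entropy production computation: given a smooth equation of state `s(ε,ν,C)` with
`θ⁻¹ = ∂_ε s`, `p = θ ∂_ν s`, `π = -θ ∂_C s`, `n = ν⁻¹`, a normalized velocity field
`u` and the conservation laws `∂_α(n u^α) = 0`, `∂_α(n ε u^α u^β + (p+π)Δ^{αβ}) = 0`,
the entropy flux `S^α = n u^α s` satisfies
`∂_α S^α = -θ⁻¹ π (∂_α u^α + n u^α ∂_α C)`. -/
theorem stmt11
    (s : ℝ → ℝ → ℝ → ℝ)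
    (hs : ContDiff ℝ (⊤ : ℕ∞) (fun q : ℝ × ℝ × ℝ => s q.1 q.2.1 q.2.2))
    (u : (Fin 4 → ℝ) → Fin 4 → ℝ) (ε ν C : (Fin 4 → ℝ) → ℝ)
    (hu : ∀ β, ContDiff ℝ (⊤ : ℕ∞) (fun x => u x β))
    (hε : ContDiff ℝ (⊤ : ℕ∞) ε) (hν : ContDiff ℝ (⊤ : ℕ∞) ν)
    (hC : ContDiff ℝ (⊤ : ℕ∞) C)
    (hnorm : ∀ x, mink (u x) (u x) = -1)
    (hνpos : ∀ x, 0 < ν x)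
    (θ p π : (Fin 4 → ℝ) → ℝ)
    -- temperature: θ⁻¹ = ∂_ε s (in particular θ ≠ 0)
    (hθ : ∀ x, θ x * deriv (fun t => s t (ν x) (C x)) (ε x) = 1)
    -- pressure: p = θ ∂_ν s
    (hp : ∀ x, p x = θ x * deriv (fun t => s (ε x) t (C x)) (ν x))
    -- bulk viscosity: π = -θ ∂_C s
    (hπ : ∀ x, π x = -(θ x) * deriv (fun t => s (ε x) (ν x) t) (C x))
    -- particle number conservation ∂_α (n u^α) = 0
    (hpart : ∀ x, ∑ α, pd α (fun y => (ν y)⁻¹ * u y α) x = 0)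
    -- energy-momentum conservation ∂_α T^{αβ} = 0
    (hT : ∀ x, ∀ β : Fin 4, ∑ α, pd α (fun y =>
        (ν y)⁻¹ * ε y * u y α * u y β
        + (p y + π y) * ((if (α : Fin 4) = β then ηd α else 0) + u y α * u y β)) x = 0) :
    ∀ x, ∑ α, pd α (fun y => (ν y)⁻¹ * u y α * s (ε y) (ν y) (C y)) x
      = -(θ x)⁻¹ * π x *
        ((∑ α, pd α (fun y => u y α) x) + (ν x)⁻¹ * ∑ α, u x α * pd α C x) := by
  have dle : ((⊤ : ℕ∞) : WithTop ℕ∞) ≠ 0 := by simp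
  have dε : ∀ y, DifferentiableAt ℝ ε y := fun y => (hε.differentiable dle) y
  have dν : ∀ y, DifferentiableAt ℝ ν y := fun y => (hν.differentiable dle) y
  have dC : ∀ y, DifferentiableAt ℝ C y := fun y => (hC.differentiable dle) y
  have du : ∀ β y, DifferentiableAt ℝ (fun z => u z β) y := fun β y =>
    ((hu β).differentiable dle) y
  have hν0 : ∀ y, ν y ≠ 0 := fun y => (hνpos y).ne'
  have dn : ∀ y, DifferentiableAt ℝ (fun z => (ν z)⁻¹) y := fun y => (dν y).inv (hν0 y)
  set F : ℝ × ℝ × ℝ → ℝ := fun q => s q.1 q.2.1 q.2.2 with hFdef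
  have dF : ∀ q, DifferentiableAt ℝ F q := fun q => (hs.differentiable dle) q
  set sE : (Fin 4 → ℝ) → ℝ := fun y => fderiv ℝ F (ε y, ν y, C y) (1,0,0) with hsEdef
  set sV : (Fin 4 → ℝ) → ℝ := fun y => fderiv ℝ F (ε y, ν y, C y) (0,1,0) with hsVdef
  set sCd : (Fin 4 → ℝ) → ℝ := fun y => fderiv ℝ F (ε y, ν y, C y) (0,0,1) with hsCdef
  have dsE : ∀ y, DifferentiableAt ℝ sE y := fun y =>
    ((contDiff_fderiv_apply hs hε hν hC (1,0,0)).differentiable dle) y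
  have dsV : ∀ y, DifferentiableAt ℝ sV y := fun y =>
    ((contDiff_fderiv_apply hs hε hν hC (0,1,0)).differentiable dle) y
  have dsCd : ∀ y, DifferentiableAt ℝ sCd y := fun y =>
    ((contDiff_fderiv_apply hs hε hν hC (0,0,1)).differentiable dle) y
  have derivE : ∀ y, deriv (fun t => s t (ν y) (C y)) (ε y) = sE y := fun y =>
    deriv_slice1 (ε y) (ν y) (C y) (dF _)
  have derivV : ∀ y, deriv (fun t => s (ε y) t (C y)) (ν y) = sV y := fun y =>
    deriv_slice2 (ε y) (ν y) (C y) (dF _)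
  have derivC : ∀ y, deriv (fun t => s (ε y) (ν y) t) (C y) = sCd y := fun y =>
    deriv_slice3 (ε y) (ν y) (C y) (dF _)
  have hθE : ∀ y, θ y * sE y = 1 := fun y => by rw [← derivE y]; exact hθ y
  have hθ0 : ∀ y, θ y ≠ 0 := fun y => left_ne_zero_of_mul_eq_one (hθE y)
  have hsE0 : ∀ y, sE y ≠ 0 := fun y => right_ne_zero_of_mul_eq_one (hθE y)
  have hθval : ∀ y, θ y = (sE y)⁻¹ := fun y => eq_inv_of_mul_eq_one_left (hθE y)
  have hpval : ∀ y, p y = (sE y)⁻¹ * sV y := fun y => by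
    rw [hp y, derivV y, hθval y]
  have hπval : ∀ y, π y = -((sE y)⁻¹) * sCd y := fun y => by
    rw [hπ y, derivC y, hθval y]
  have dq : ∀ y, DifferentiableAt ℝ (fun z => p z + π z) y := by
    have hqe : (fun z => p z + π z) = fun z => (sE z)⁻¹ * sV z + -((sE z)⁻¹) * sCd z :=
      funext fun z => by rw [hpval z, hπval z]
    rw [hqe]
    exact fun y => (((dsE y).inv (hsE0 y)).mul (dsV y)).add
      ((((dsE y).inv (hsE0 y)).neg).mul (dsCd y))
  have hchain : ∀ (α : Fin 4) (y), pd α (fun z => s (ε z) (ν z) (C z)) y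
      = sE y * pd α ε y + sV y * pd α ν y + sCd y * pd α C y := fun α y =>
    pd_chain3 (dF _) (dε y) (dν y) (dC y) α
  have dsF : ∀ y, DifferentiableAt ℝ (fun z => s (ε z) (ν z) (C z)) y := fun y =>
    (dF _).comp y ((dε y).prodMk ((dν y).prodMk (dC y)))
  -- orthogonality u_β ∂_α u^β = 0
  have hperp : ∀ (α : Fin 4) (y : Fin 4 → ℝ),
      ∑ β, ηd β * u y β * pd α (fun z => u z β) y = 0 := by
    intro α y
    have hconst : pd α (fun z => mink (u z) (u z)) y = 0 := by
      rw [pd_congr (fun z => hnorm z) α y, pd_const]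
    have hexp : pd α (fun z => mink (u z) (u z)) y
        = ∑ β, (2 * (ηd β * u y β * pd α (fun z => u z β) y)) := by
      have h0 : (fun z => mink (u z) (u z)) = fun z => ∑ β, ηd β * u z β * u z β := rfl
      rw [h0, pd_sum (fun β => ((differentiableAt_const _).fun_mul (du β y)).fun_mul (du β y)) α]
      refine Finset.sum_congr rfl fun β _ => ?_
      rw [show (fun z => ηd β * u z β * u z β) = (fun z => ηd β * (u z β * u z β)) from
            funext fun z => by ring,
        pd_cmul (ηd β) ((du β y).fun_mul (du β y)) α, pd_mul (du β y) (du β y) α]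
      ring
    have h2 : (2:ℝ) * (∑ β, ηd β * u y β * pd α (fun z => u z β) y) = 0 := by
      rw [Finset.mul_sum, ← hexp, hconst]
    linarith
  intro x
  set A := ∑ α, pd α (fun y => u y α) x with hAdef
  set DC := ∑ α, u x α * pd α C x with hDCdef
  set Dν := ∑ α, u x α * pd α ν x with hDνdef
  set Dε := ∑ α, u x α * pd α ε x with hDεdef
  -- particle conservation gives u^α ∂_α ν = ν ∂_α u^α
  have hDν : Dν = ν x * A := by
    have e1 : ∀ α : Fin 4, pd α (fun y => (ν y)⁻¹ * u y α) x
        = (ν x)⁻¹ * pd α (fun y => u y α) x + (-((ν x)^2)⁻¹) * (u x α * pd α ν x) := by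
      intro α
      rw [pd_mul (dn x) (du α x) α, pd_inv (dν x) (hν0 x) α]; ring
    have h2 : (0:ℝ) = (ν x)⁻¹ * A + (-((ν x)^2)⁻¹) * Dν := by
      calc (0:ℝ) = ∑ α, pd α (fun y => (ν y)⁻¹ * u y α) x := (hpart x).symm
      _ = ∑ α, ((ν x)⁻¹ * pd α (fun y => u y α) x + (-((ν x)^2)⁻¹) * (u x α * pd α ν x)) :=
          Finset.sum_congr rfl fun α _ => e1 α
      _ = (ν x)⁻¹ * A + (-((ν x)^2)⁻¹) * Dν := by
          rw [Finset.sum_add_distrib, ← Finset.mul_sum, ← Finset.mul_sum, hAdef, hDνdef]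
    have hνx : ν x ≠ 0 := hν0 x
    field_simp at h2
    apply mul_right_cancel₀ hνx
    linear_combination (ν x) * h2
  set Tf : Fin 4 → Fin 4 → (Fin 4 → ℝ) → ℝ := fun α β y =>
      (ν y)⁻¹ * ε y * u y α * u y β
        + (p y + π y) * ((if α = β then ηd α else 0) + u y α * u y β) with hTfdef
  have hT' : ∀ β : Fin 4, ∑ α, pd α (Tf α β) x = 0 := fun β => hT x β
  have dTf : ∀ (α β : Fin 4) (y), DifferentiableAt ℝ (Tf α β) y := by
    intro α β y
    rw [hTfdef]
    exact ((((dn y).mul (dε y)).mul (du α y)).mul (du β y)).add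
      ((dq y).mul ((differentiableAt_const _).add ((du α y).mul (du β y))))
  -- pointwise value of the contracted tensor: u_β T^{αβ} = -n ε u^α
  have hGpt : ∀ (α : Fin 4) (y), (∑ β, ηd β * u y β * Tf α β y)
      = -(ε y * ((ν y)⁻¹ * u y α)) := by
    intro α y
    have hn : (∑ β, ηd β * u y β * u y β) = -1 := hnorm y
    calc ∑ β, ηd β * u y β * Tf α β y
        = ∑ β, (((ν y)⁻¹ * ε y * u y α + (p y + π y) * u y α) * (ηd β * u y β * u y β)
            + (p y + π y) * (if α = β then ηd α * (ηd β * u y β) else 0)) := by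
          refine Finset.sum_congr rfl fun β _ => ?_
          rw [hTfdef]
          by_cases h : α = β
          · simp only [if_pos h]; subst h; ring
          · simp only [if_neg h]; ring
      _ = ((ν y)⁻¹ * ε y * u y α + (p y + π y) * u y α) * (∑ β, ηd β * u y β * u y β)
            + (p y + π y) * (ηd α * (ηd α * u y α)) := by
          rw [Finset.sum_add_distrib, ← Finset.mul_sum, ← Finset.mul_sum,
            Finset.sum_ite_eq, if_pos (Finset.mem_univ α)]
      _ = -(ε y * ((ν y)⁻¹ * u y α)) := by
          rw [hn]
          linear_combination (p y + π y) * u y α * ηd_sq α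
  -- ∑_α ∂_α (u_β T^{αβ}) computed from the pointwise value
  have hEpart : ∑ α, pd α (fun y => ε y * ((ν y)⁻¹ * u y α)) x = (ν x)⁻¹ * Dε := by
    have e1 : ∀ α : Fin 4, pd α (fun y => ε y * ((ν y)⁻¹ * u y α)) x
        = ε x * pd α (fun y => (ν y)⁻¹ * u y α) x + (ν x)⁻¹ * (u x α * pd α ε x) := by
      intro α; rw [pd_mul (dε x) ((dn x).fun_mul (du α x)) α]; ring
    calc ∑ α, pd α (fun y => ε y * ((ν y)⁻¹ * u y α)) x
        = ∑ α, (ε x * pd α (fun y => (ν y)⁻¹ * u y α) x + (ν x)⁻¹ * (u x α * pd α ε x)) :=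
          Finset.sum_congr rfl fun α _ => e1 α
      _ = ε x * (∑ α, pd α (fun y => (ν y)⁻¹ * u y α) x) + (ν x)⁻¹ * Dε := by
          rw [Finset.sum_add_distrib, ← Finset.mul_sum, ← Finset.mul_sum, hDεdef]
      _ = (ν x)⁻¹ * Dε := by rw [hpart x]; ring
  have hW1 : ∑ α, pd α (fun y => ∑ β, ηd β * u y β * Tf α β y) x = -((ν x)⁻¹ * Dε) := by
    have e1 : ∀ α : Fin 4, pd α (fun y => ∑ β, ηd β * u y β * Tf α β y) x
        = -(pd α (fun y => ε y * ((ν y)⁻¹ * u y α)) x) := by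
      intro α
      rw [pd_congr (fun y => hGpt α y) α x, pd_neg]
    calc ∑ α, pd α (fun y => ∑ β, ηd β * u y β * Tf α β y) x
        = ∑ α, -(pd α (fun y => ε y * ((ν y)⁻¹ * u y α)) x) :=
          Finset.sum_congr rfl fun α _ => e1 α
      _ = -(∑ α, pd α (fun y => ε y * ((ν y)⁻¹ * u y α)) x) := by
          rw [← Finset.sum_neg_distrib]
      _ = -((ν x)⁻¹ * Dε) := by rw [hEpart]
  -- ∑_α ∂_α (u_β T^{αβ}) computed by the product rule
  have hW2 : ∑ α, pd α (fun y => ∑ β, ηd β * u y β * Tf α β y) x = (p x + π x) * A := by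
    have e1 : ∀ α : Fin 4, pd α (fun y => ∑ β, ηd β * u y β * Tf α β y) x
        = ∑ β, (ηd β * u x β * pd α (Tf α β) x
            + ηd β * Tf α β x * pd α (fun z => u z β) x) := by
      intro α
      rw [pd_sum (fun β => ((differentiableAt_const _).fun_mul (du β x)).fun_mul (dTf α β x)) α]
      refine Finset.sum_congr rfl fun β _ => ?_
      rw [show (fun y => ηd β * u y β * Tf α β y) = (fun y => ηd β * (u y β * Tf α β y)) from
            funext fun y => by ring,
        pd_cmul (ηd β) ((du β x).fun_mul (dTf α β x)) α, pd_mul (du β x) (dTf α β x) α]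
      ring
    have inner2 : ∀ α : Fin 4, ∑ β, ηd β * Tf α β x * pd α (fun z => u z β) x
        = (p x + π x) * pd α (fun z => u z α) x := by
      intro α
      calc ∑ β, ηd β * Tf α β x * pd α (fun z => u z β) x
          = ∑ β, (((ν x)⁻¹ * ε x * u x α + (p x + π x) * u x α)
                * (ηd β * u x β * pd α (fun z => u z β) x)
              + (p x + π x) * (if α = β then ηd α * (ηd β * pd α (fun z => u z β) x) else 0)) := by
            refine Finset.sum_congr rfl fun β _ => ?_
            rw [hTfdef]
            by_cases h : α = β
            · simp only [if_pos h]; subst h; ring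
            · simp only [if_neg h]; ring
        _ = ((ν x)⁻¹ * ε x * u x α + (p x + π x) * u x α)
              * (∑ β, ηd β * u x β * pd α (fun z => u z β) x)
            + (p x + π x) * (ηd α * (ηd α * pd α (fun z => u z α) x)) := by
            rw [Finset.sum_add_distrib, ← Finset.mul_sum, ← Finset.mul_sum,
              Finset.sum_ite_eq, if_pos (Finset.mem_univ α)]
        _ = (p x + π x) * pd α (fun z => u z α) x := by
            rw [hperp α x]
            linear_combination (p x + π x) * pd α (fun z => u z α) x * ηd_sq α
    calc ∑ α, pd α (fun y => ∑ β, ηd β * u y β * Tf α β y) x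
        = ∑ α, ((∑ β, ηd β * u x β * pd α (Tf α β) x)
            + ∑ β, ηd β * Tf α β x * pd α (fun z => u z β) x) := by
          refine Finset.sum_congr rfl fun α _ => ?_
          rw [e1 α, Finset.sum_add_distrib]
      _ = (∑ α, ∑ β, ηd β * u x β * pd α (Tf α β) x)
            + ∑ α, ∑ β, ηd β * Tf α β x * pd α (fun z => u z β) x := Finset.sum_add_distrib
      _ = 0 + ∑ α, (p x + π x) * pd α (fun z => u z α) x := by
          congr 1
          · rw [Finset.sum_comm]
            refine Finset.sum_eq_zero fun β _ => ?_
            calc ∑ α, ηd β * u x β * pd α (Tf α β) x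
                = ηd β * u x β * ∑ α, pd α (Tf α β) x := by rw [Finset.mul_sum]
              _ = 0 := by rw [hT' β, mul_zero]
          · exact Finset.sum_congr rfl fun α _ => inner2 α
      _ = (p x + π x) * A := by
          rw [zero_add, ← Finset.mul_sum, hAdef]
  have hDε : (ν x)⁻¹ * Dε = -((p x + π x) * A) := by
    have h := hW1.symm.trans hW2
    linarith
  -- expand the entropy flux divergence
  have hLHS : ∑ α, pd α (fun y => (ν y)⁻¹ * u y α * s (ε y) (ν y) (C y)) x
      = (ν x)⁻¹ * (sE x * Dε + sV x * Dν + sCd x * DC) := by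
    have e1 : ∀ α : Fin 4, pd α (fun y => (ν y)⁻¹ * u y α * s (ε y) (ν y) (C y)) x
        = ((ν x)⁻¹ * (sE x * (u x α * pd α ε x)) + (ν x)⁻¹ * (sV x * (u x α * pd α ν x))
            + (ν x)⁻¹ * (sCd x * (u x α * pd α C x)))
          + s (ε x) (ν x) (C x) * pd α (fun y => (ν y)⁻¹ * u y α) x := by
      intro α
      rw [pd_mul ((dn x).fun_mul (du α x)) (dsF x) α, hchain α x]
      ring
    calc ∑ α, pd α (fun y => (ν y)⁻¹ * u y α * s (ε y) (ν y) (C y)) x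
        = ∑ α, (((ν x)⁻¹ * (sE x * (u x α * pd α ε x))
              + (ν x)⁻¹ * (sV x * (u x α * pd α ν x))
              + (ν x)⁻¹ * (sCd x * (u x α * pd α C x)))
            + s (ε x) (ν x) (C x) * pd α (fun y => (ν y)⁻¹ * u y α) x) :=
          Finset.sum_congr rfl fun α _ => e1 α
      _ = ((∑ α, (ν x)⁻¹ * (sE x * (u x α * pd α ε x)))
            + (∑ α, (ν x)⁻¹ * (sV x * (u x α * pd α ν x)))
            + (∑ α, (ν x)⁻¹ * (sCd x * (u x α * pd α C x))))
          + ∑ α, s (ε x) (ν x) (C x) * pd α (fun y => (ν y)⁻¹ * u y α) x := by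
          rw [Finset.sum_add_distrib, Finset.sum_add_distrib, Finset.sum_add_distrib]
      _ = ((ν x)⁻¹ * (sE x * Dε) + (ν x)⁻¹ * (sV x * Dν) + (ν x)⁻¹ * (sCd x * DC))
          + s (ε x) (ν x) (C x) * ∑ α, pd α (fun y => (ν y)⁻¹ * u y α) x := by
          rw [← Finset.mul_sum, ← Finset.mul_sum, ← Finset.mul_sum, ← Finset.mul_sum,
            ← Finset.mul_sum, ← Finset.mul_sum, ← Finset.mul_sum,
            hDεdef, hDνdef, hDCdef]
      _ = (ν x)⁻¹ * (sE x * Dε + sV x * Dν + sCd x * DC) := by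
          rw [hpart x]; ring
  rw [hLHS]
  -- final algebra
  have hsEx : sE x = (θ x)⁻¹ := eq_inv_of_mul_eq_one_right (hθE x)
  have hθx : θ x ≠ 0 := hθ0 x
  have hsVx : sV x = (θ x)⁻¹ * p x := by
    rw [hp x, derivV x]; field_simp
  have hsCx : sCd x = -((θ x)⁻¹ * π x) := by
    rw [hπ x, derivC x]; field_simp
  have hinv : (ν x)⁻¹ * ν x = 1 := inv_mul_cancel₀ (hν0 x)
  rw [hsEx, hsVx, hsCx, hDν]
  linear_combination (θ x)⁻¹ * hDε + (θ x)⁻¹ * p x * A * hinv
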